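/- Let A be a nontrivial slender abelian group with cardinality strictly less than 2^ℵ₀. Then the set of group homomorphisms Hom(∏_{n ∈ ℕ} ℤ, A) has cardinality exactly |A|. -/

import Mathlib

/-- An abelian group `A` is slender if every homomorphism `∏_{n ∈ ℕ} ℤ → A` vanishes on
all sequences supported beyond the first `n` coordinates, for some `n`. -/
def Slender (A : Type) [AddCommGroup A] : Prop :=
  ∀ φ : (ℕ → ℤ) →+ A, ∃ n : ℕ, ∀ x : ℕ → ℤ, (∀ i < n, x i = 0) → φ x = 0

open Filter in
/-- A slender group has no nonzero torsion elements. -/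
lemma slender_torsion_free {A : Type} [AddCommGroup A] (hA : Slender A)
    (a : A) (hfin : IsOfFinAddOrder a) : a = 0 := by
  by_contra ha
  set m := addOrderOf a with hm
  have hmpos : 0 < m := hfin.addOrderOf_pos
  haveI : NeZero m := ⟨hmpos.ne'⟩
  set U : Ultrafilter ℕ := hyperfilter ℕ with hU
  -- uniqueness of ultrafilter limits
  have huniq : ∀ (f : ℕ → ZMod m) (c d : ZMod m),
      f ⁻¹' {c} ∈ U → f ⁻¹' {d} ∈ U → c = d := by
    intro f c d hc hd
    by_contra hcd
    have h0 : f ⁻¹' {c} ∩ f ⁻¹' {d} ∈ U := inter_mem hc hd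
    have hempty : f ⁻¹' {c} ∩ f ⁻¹' {d} = ∅ := by
      ext i
      simp only [Set.mem_inter_iff, Set.mem_preimage, Set.mem_singleton_iff,
        Set.mem_empty_iff_false, iff_false]
      rintro ⟨h1, h2⟩
      exact hcd (h1 ▸ h2 ▸ rfl)
    rw [hempty] at h0
    exact U.empty_notMem h0
  have hex : ∀ f : ℕ → ZMod m, ∃ c : ZMod m, f ⁻¹' {c} ∈ U := by
    intro f
    obtain ⟨c, hc⟩ := (Ultrafilter.map f U).eq_pure_of_finite
    refine ⟨c, Ultrafilter.mem_map.mp ?_⟩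
    rw [hc]
    exact rfl
  -- the ultrafilter limit function
  set xi : (ℕ → ZMod m) → ZMod m := fun f => Classical.choose (hex f) with hxi
  have hxi_mem : ∀ f : ℕ → ZMod m, f ⁻¹' {xi f} ∈ U := fun f => Classical.choose_spec (hex f)
  have hxi_eq : ∀ (f : ℕ → ZMod m) (c : ZMod m), f ⁻¹' {c} ∈ U → xi f = c :=
    fun f c hc => huniq f (xi f) c (hxi_mem f) hc
  have hxi_add : ∀ f g : ℕ → ZMod m, xi (f + g) = xi f + xi g := by
    intro f g
    apply hxi_eq
    have hsub : f ⁻¹' {xi f} ∩ g ⁻¹' {xi g} ⊆ (f + g) ⁻¹' {xi f + xi g} := by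
      rintro i ⟨h1, h2⟩
      simp only [Set.mem_preimage, Set.mem_singleton_iff] at *
      simp [h1, h2]
    exact mem_of_superset (inter_mem (hxi_mem f) (hxi_mem g)) hsub
  set xiHom : (ℕ → ZMod m) →+ ZMod m := AddMonoidHom.mk' xi hxi_add with hxiHom
  -- reduction mod m, coordinatewise
  set castHom : (ℕ → ℤ) →+ (ℕ → ZMod m) :=
    AddMonoidHom.mk' (fun x i => ((x i : ℤ) : ZMod m)) (by
      intro x y; funext i; simp only [Pi.add_apply]; push_cast; ring) with hcastHom
  -- map ZMod m → A sending 1 to a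
  have hFa : (zmultiplesHom A a) (m : ℤ) = 0 := by
    simp only [zmultiplesHom_apply, natCast_zsmul]
    exact addOrderOf_nsmul_eq_zero a
  set L : ZMod m →+ A := ZMod.lift m ⟨zmultiplesHom A a, hFa⟩ with hL
  set φ : (ℕ → ℤ) →+ A := (L.comp xiHom).comp castHom with hφ
  obtain ⟨n, hn⟩ := hA φ
  set x : ℕ → ℤ := fun i => if i < n then 0 else 1 with hx
  have hx0 : ∀ i < n, x i = 0 := fun i hi => by simp [hx, hi]
  have hφx : φ x = 0 := hn x hx0
  -- but φ x = a
  have hxi1 : xi (castHom x) = ((1 : ℤ) : ZMod m) := by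
    apply hxi_eq
    have hsub : {i : ℕ | n ≤ i} ⊆ (castHom x) ⁻¹' {((1 : ℤ) : ZMod m)} := by
      intro i hi
      simp only [Set.mem_setOf_eq] at hi
      simp [hcastHom, hx, Nat.not_lt.mpr hi]
    refine mem_of_superset ?_ hsub
    have hfin' : ({i : ℕ | i < n} : Set ℕ).Finite := Set.finite_Iio n
    have hcompl : ({i : ℕ | n ≤ i} : Set ℕ) = ({i : ℕ | i < n} : Set ℕ)ᶜ := by
      ext i; simp [Nat.not_lt]
    rw [hU, hcompl]
    exact Filter.compl_mem_hyperfilter_of_finite hfin'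
  have hφxa : φ x = a := by
    have h1 : φ x = L (xi (castHom x)) := rfl
    rw [h1, hxi1, hL, ZMod.lift_coe]
    simp
  rw [hφx] at hφxa
  exact ha hφxa.symm

lemma slender_infinite {A : Type} [AddCommGroup A] [Nontrivial A] (hA : Slender A) :
    Infinite A := by
  rw [← not_finite_iff_infinite]
  intro hfin
  obtain ⟨a, ha⟩ := exists_ne (0 : A)
  exact ha (slender_torsion_free hA a (isOfFinAddOrder_of_finite a))

open Cardinal in
/-- If `A` is a nontrivial slender abelian group of cardinality less than the continuum,
then `Hom(∏_{n ∈ ℕ} ℤ, A)` has cardinality exactly `|A|`. -/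
theorem stmt_7 (A : Type) [AddCommGroup A] [Nontrivial A] (hA : Slender A)
    (hcard : #A < 2 ^ aleph0) :
    #((ℕ → ℤ) →+ A) = #A := by
  classical
  haveI := slender_infinite hA
  apply le_antisymm
  · -- each hom is determined by finitely many values
    have hinj : Function.Injective (fun φ : (ℕ → ℤ) →+ A =>
        (⟨Nat.find (hA φ), fun i => φ (Pi.single (i : ℕ) 1)⟩ : Σ n : ℕ, Fin n → A)) := by
      intro φ ψ h
      set nn := Nat.find (hA φ) with hnn
      have hn : nn = Nat.find (hA ψ) := congrArg Sigma.fst h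
      have heq := (Sigma.mk.inj_iff.mp h).2
      have hvals : ∀ i : ℕ, i < nn → φ (Pi.single i 1) = ψ (Pi.single i 1) := by
        intro i hi
        have := (Fin.heq_fun_iff hn).mp heq ⟨i, hi⟩
        simpa using this
      -- ψ also vanishes beyond nn
      have hψv : ∀ y : ℕ → ℤ, (∀ i < nn, y i = 0) → ψ y = 0 := by
        intro y hy
        exact Nat.find_spec (hA ψ) y (fun i hi => hy i (hn ▸ hi))
      have hφv : ∀ y : ℕ → ℤ, (∀ i < nn, y i = 0) → φ y = 0 :=
        Nat.find_spec (hA φ)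
      ext x
      have key : ∀ (χ : (ℕ → ℤ) →+ A), (∀ y : ℕ → ℤ, (∀ i < nn, y i = 0) → χ y = 0) →
          χ x = ∑ i ∈ Finset.range nn, x i • χ (Pi.single i 1) := by
        intro χ hχ
        set s : ℕ → ℤ := ∑ i ∈ Finset.range nn, x i • Pi.single i (1 : ℤ) with hs
        have hsval : ∀ j < nn, s j = x j := by
          intro j hj
          rw [hs, Finset.sum_apply]
          rw [Finset.sum_eq_single j]
          · simp
          · intro b _ hbj
            simp [Pi.single_apply, hbj, Ne.symm hbj]
          · intro hjn
            exact absurd (Finset.mem_range.mpr hj) hjn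
        have hrest : χ (x - s) = 0 := by
          apply hχ
          intro i hi
          simp [Pi.sub_apply, hsval i hi]
        have hdecomp : χ x = χ s + χ (x - s) := by
          rw [← map_add]
          congr 1
          abel
        rw [hdecomp, hrest, add_zero, hs, map_sum]
        congr 1
        funext i
        rw [map_zsmul]
      rw [key φ hφv, key ψ hψv]
      apply Finset.sum_congr rfl
      intro i hi
      rw [hvals i (Finset.mem_range.mp hi)]
    calc #((ℕ → ℤ) →+ A) ≤ #(Σ n : ℕ, Fin n → A) := mk_le_of_injective hinj
      _ = Cardinal.sum (fun n : ℕ => #(Fin n → A)) := mk_sigma _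
      _ ≤ Cardinal.sum (fun _ : ℕ => #A) := by
          apply Cardinal.sum_le_sum
          intro n
          rw [mk_arrow]
          simp only [mk_fin, lift_natCast, lift_id]
          exact power_nat_le (aleph0_le_mk A)
      _ = #ℕ * #A := by rw [Cardinal.sum_const]; simp
      _ = #A := by
          rw [mk_nat, Cardinal.mul_eq_max le_rfl (aleph0_le_mk A)]
          exact max_eq_right (aleph0_le_mk A)
  · -- A embeds: a ↦ (x ↦ x 0 • a)
    have hinj : Function.Injective
        (fun a : A => (zmultiplesHom A a).comp (Pi.evalAddMonoidHom (fun _ : ℕ => ℤ) 0)) := by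
      intro a b h
      have := congrFun (congrArg DFunLike.coe h) (Pi.single 0 1)
      simpa using this
    exact mk_le_of_injective hinj
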